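/- For every integer n ≥ 1: 27·σ₇(n) = 21(2n−1)·σ₅(n) + 7·σ₃(n) − σ₁(n) + 168·Σ_{i+j=n} (3·σ₁(i)·σ₅(j) + 5·σ₃(i)·σ₃(j)), where the sum is over ordered pairs of positive integers (i,j) with i + j = n. (This is the q-coefficient identity obtained from 9E₈ = 2E₂E₆ + E₄² + (2πi/3)·δ₆E₆, stated here with the correct middle term (7σ₃(n) − σ₁(n))/3 and cleared denominators.) -/

import Mathlib

/-- the divisor power sum `σ_k(n) = Σ_{d∣n} d^k` -/
def sigmaNat (k n : ℕ) : ℕ := ∑ d ∈ n.divisors, d ^ k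

namespace SigmaSevenAux

open Finset

abbrev Tup := ℕ × ℕ × ℕ × ℕ

/-- The set of quadruples `(a,b,x,y)` of positive integers with `a*x + b*y = n`. -/
def S (n : ℕ) : Finset Tup :=
  ((range (n+1)) ×ˢ (range (n+1)) ×ˢ (range (n+1)) ×ˢ (range (n+1))).filter
    (fun p => 0 < p.1 ∧ 0 < p.2.1 ∧ 0 < p.2.2.1 ∧ 0 < p.2.2.2 ∧
      p.1 * p.2.2.1 + p.2.1 * p.2.2.2 = n)

lemma mem_S {n : ℕ} {p : Tup} :
    p ∈ S n ↔ 0 < p.1 ∧ 0 < p.2.1 ∧ 0 < p.2.2.1 ∧ 0 < p.2.2.2 ∧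
      p.1 * p.2.2.1 + p.2.1 * p.2.2.2 = n := by
  obtain ⟨a, b, x, y⟩ := p
  simp only [S, mem_filter, mem_product, mem_range]
  constructor
  · tauto
  · rintro ⟨ha, hb, hx, hy, he⟩
    have h1 : a ≤ a * x := Nat.le_mul_of_pos_right a hx
    have h2 : b ≤ b * y := Nat.le_mul_of_pos_right b hy
    have h3 : x ≤ a * x := Nat.le_mul_of_pos_left x ha
    have h4 : y ≤ b * y := Nat.le_mul_of_pos_left y hb
    exact ⟨⟨by omega, by omega, by omega, by omega⟩, ha, hb, hx, hy, he⟩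

/-! ### Transport (bijection) lemmas -/

/-- the swap `(a,b,x,y) ↦ (b,a,y,x)` -/
def sw (p : Tup) : Tup := (p.2.1, p.1, p.2.2.2, p.2.2.1)

lemma sw_mem {n : ℕ} {p : Tup} (h : p ∈ S n) : sw p ∈ S n := by
  rw [mem_S] at h ⊢
  obtain ⟨a, b, x, y⟩ := p
  obtain ⟨ha, hb, hx, hy, he⟩ := h
  exact ⟨hb, ha, hy, hx, by rw [Nat.add_comm]; exact he⟩

lemma sum_swap_all (n : ℕ) (f : Tup → ℤ) :
    ∑ p ∈ S n, f p = ∑ p ∈ S n, f (sw p) :=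
  Finset.sum_nbij' (i := sw) (j := sw)
    (fun _ hp => sw_mem hp) (fun _ hp => sw_mem hp)
    (fun _ _ => rfl) (fun _ _ => rfl) (fun _ _ => rfl)

lemma sum_swap_ab (n : ℕ) (f : Tup → ℤ) :
    ∑ p ∈ (S n).filter (fun p => p.1 < p.2.1), f p
      = ∑ p ∈ (S n).filter (fun p => p.2.1 < p.1), f (sw p) := by
  refine Finset.sum_nbij' (i := sw) (j := sw) ?_ ?_ (fun _ _ => rfl) (fun _ _ => rfl)
    (fun _ _ => rfl)
  · intro p hp
    rw [mem_filter] at hp ⊢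
    exact ⟨sw_mem hp.1, hp.2⟩
  · intro p hp
    rw [mem_filter] at hp ⊢
    exact ⟨sw_mem hp.1, hp.2⟩

lemma sum_swap_xy (n : ℕ) (f : Tup → ℤ) :
    ∑ p ∈ (S n).filter (fun p => p.2.2.1 < p.2.2.2), f p
      = ∑ p ∈ (S n).filter (fun p => p.2.2.2 < p.2.2.1), f (sw p) := by
  refine Finset.sum_nbij' (i := sw) (j := sw) ?_ ?_ (fun _ _ => rfl) (fun _ _ => rfl)
    (fun _ _ => rfl)
  · intro p hp
    rw [mem_filter] at hp ⊢
    exact ⟨sw_mem hp.1, hp.2⟩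
  · intro p hp
    rw [mem_filter] at hp ⊢
    exact ⟨sw_mem hp.1, hp.2⟩

/-- `(a,b,x,y) ↦ (a, a+b, x-y, y)`, bijection from `{y < x}` to `{a < b}`. -/
def phi (p : Tup) : Tup := (p.1, p.1 + p.2.1, p.2.2.1 - p.2.2.2, p.2.2.2)

def phiInv (p : Tup) : Tup := (p.1, p.2.1 - p.1, p.2.2.1 + p.2.2.2, p.2.2.2)

lemma sum_phi (n : ℕ) (f : Tup → ℤ) :
    ∑ p ∈ (S n).filter (fun p => p.2.2.2 < p.2.2.1), f (phi p)
      = ∑ p ∈ (S n).filter (fun p => p.1 < p.2.1), f p := by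
  refine Finset.sum_nbij' (i := phi) (j := phiInv) ?_ ?_ ?_ ?_ (fun _ _ => rfl)
  · intro p hp
    rw [mem_filter, mem_S] at hp
    obtain ⟨⟨ha, hb, hx, hy, he⟩, hlt⟩ := hp
    obtain ⟨a, b, x, y⟩ := p
    simp only at ha hb hx hy he hlt
    rw [mem_filter, mem_S]
    dsimp only [phi]
    refine ⟨⟨ha, by omega, by omega, hy, ?_⟩, by omega⟩
    have h : a * (x - y) + (a + b) * y = a * ((x - y) + y) + b * y := by ring
    rw [h, Nat.sub_add_cancel hlt.le]
    exact he
  · intro p hp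
    rw [mem_filter, mem_S] at hp
    obtain ⟨⟨ha, hb, hx, hy, he⟩, hlt⟩ := hp
    obtain ⟨a, b, x, y⟩ := p
    simp only at ha hb hx hy he hlt
    rw [mem_filter, mem_S]
    dsimp only [phiInv]
    refine ⟨⟨ha, by omega, by omega, hy, ?_⟩, by omega⟩
    have h : a * (x + y) + (b - a) * y = a * x + (a + (b - a)) * y := by ring
    rw [h, Nat.add_sub_cancel' hlt.le]
    exact he
  · intro p hp
    rw [mem_filter, mem_S] at hp
    obtain ⟨⟨ha, hb, hx, hy, he⟩, hlt⟩ := hp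
    obtain ⟨a, b, x, y⟩ := p
    simp only at ha hb hx hy he hlt
    show (a, (a + b) - a, (x - y) + y, y) = (a, b, x, y)
    have h1 : (a + b) - a = b := by omega
    have h2 : (x - y) + y = x := by omega
    rw [h1, h2]
  · intro p hp
    rw [mem_filter, mem_S] at hp
    obtain ⟨⟨ha, hb, hx, hy, he⟩, hlt⟩ := hp
    obtain ⟨a, b, x, y⟩ := p
    simp only at ha hb hx hy he hlt
    show (a, a + (b - a), (x + y) - y, y) = (a, b, x, y)
    have h1 : a + (b - a) = b := by omega
    have h2 : (x + y) - y = x := by omega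
    rw [h1, h2]

/-- `(a,b,x,y) ↦ (a+b, b, x, y-x)`, bijection from `{x < y}` to `{b < a}`. -/
def psi (p : Tup) : Tup := (p.1 + p.2.1, p.2.1, p.2.2.1, p.2.2.2 - p.2.2.1)

def psiInv (p : Tup) : Tup := (p.1 - p.2.1, p.2.1, p.2.2.1, p.2.2.2 + p.2.2.1)

lemma sum_psi (n : ℕ) (f : Tup → ℤ) :
    ∑ p ∈ (S n).filter (fun p => p.2.2.1 < p.2.2.2), f (psi p)
      = ∑ p ∈ (S n).filter (fun p => p.2.1 < p.1), f p := by
  refine Finset.sum_nbij' (i := psi) (j := psiInv) ?_ ?_ ?_ ?_ (fun _ _ => rfl)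
  · intro p hp
    rw [mem_filter, mem_S] at hp
    obtain ⟨⟨ha, hb, hx, hy, he⟩, hlt⟩ := hp
    obtain ⟨a, b, x, y⟩ := p
    simp only at ha hb hx hy he hlt
    rw [mem_filter, mem_S]
    dsimp only [psi]
    refine ⟨⟨by omega, hb, hx, by omega, ?_⟩, by omega⟩
    have h : (a + b) * x + b * (y - x) = a * x + b * (x + (y - x)) := by ring
    rw [h, Nat.add_sub_cancel' hlt.le]
    exact he
  · intro p hp
    rw [mem_filter, mem_S] at hp
    obtain ⟨⟨ha, hb, hx, hy, he⟩, hlt⟩ := hp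
    obtain ⟨a, b, x, y⟩ := p
    simp only at ha hb hx hy he hlt
    rw [mem_filter, mem_S]
    dsimp only [psiInv]
    refine ⟨⟨by omega, hb, hx, by omega, ?_⟩, by omega⟩
    have h : (a - b) * x + b * (y + x) = ((a - b) + b) * x + b * y := by ring
    rw [Nat.sub_add_cancel hlt.le] at h
    rw [h]
    exact he
  · intro p hp
    rw [mem_filter, mem_S] at hp
    obtain ⟨⟨ha, hb, hx, hy, he⟩, hlt⟩ := hp
    obtain ⟨a, b, x, y⟩ := p
    simp only at ha hb hx hy he hlt
    show ((a + b) - b, b, x, (y - x) + x) = (a, b, x, y)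
    have h1 : (a + b) - b = a := by omega
    have h2 : (y - x) + x = y := by omega
    rw [h1, h2]
  · intro p hp
    rw [mem_filter, mem_S] at hp
    obtain ⟨⟨ha, hb, hx, hy, he⟩, hlt⟩ := hp
    obtain ⟨a, b, x, y⟩ := p
    simp only at ha hb hx hy he hlt
    show ((a - b) + b, b, x, (y + x) - x) = (a, b, x, y)
    have h1 : (a - b) + b = a := by omega
    have h2 : (y + x) - x = y := by omega
    rw [h1, h2]

/-! ### Diagonal parametrizations -/

lemma diag_ab (n : ℕ) (f : Tup → ℤ) :
    ∑ p ∈ (S n).filter (fun p => p.1 = p.2.1), f p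
      = ∑ dm ∈ n.divisorsAntidiagonal, ∑ j ∈ Ico 1 dm.2, f (dm.1, dm.1, j, dm.2 - j) := by
  rw [Finset.sum_sigma']
  refine Finset.sum_nbij'
    (i := fun p => ⟨(p.1, p.2.2.1 + p.2.2.2), p.2.2.1⟩)
    (j := fun q => (q.1.1, q.1.1, q.2, q.1.2 - q.2)) ?_ ?_ ?_ ?_ ?_
  · intro p hp
    rw [mem_filter, mem_S] at hp
    obtain ⟨⟨ha, hb, hx, hy, he⟩, hd⟩ := hp
    obtain ⟨a, b, x, y⟩ := p
    simp only at ha hb hx hy he hd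
    subst hd
    rw [mem_sigma, Nat.mem_divisorsAntidiagonal]
    dsimp only
    have hax : 0 < a * x := Nat.mul_pos ha hx
    have h : a * (x + y) = n := by rw [Nat.mul_add]; exact he
    exact ⟨⟨h, by omega⟩, by rw [mem_Ico]; omega⟩
  · intro q hq
    rw [mem_sigma, Nat.mem_divisorsAntidiagonal, mem_Ico] at hq
    obtain ⟨⟨d, m⟩, j⟩ := q
    dsimp only at hq ⊢
    obtain ⟨⟨he, hn⟩, hj1, hj2⟩ := hq
    rw [mem_filter, mem_S]
    dsimp only
    have hd : 0 < d := by
      rcases Nat.eq_zero_or_pos d with h | h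
      · exfalso; apply hn; rw [← he, h]; ring
      · exact h
    refine ⟨⟨hd, hd, by omega, by omega, ?_⟩, rfl⟩
    rw [← Nat.mul_add, Nat.add_sub_cancel' hj2.le]
    exact he
  · intro p hp
    rw [mem_filter, mem_S] at hp
    obtain ⟨⟨ha, hb, hx, hy, he⟩, hd⟩ := hp
    obtain ⟨a, b, x, y⟩ := p
    simp only at ha hb hx hy he hd
    subst hd
    have h : (x + y) - x = y := by omega
    show (a, a, x, (x + y) - x) = (a, a, x, y)
    rw [h]
  · intro q hq
    rw [mem_sigma, Nat.mem_divisorsAntidiagonal, mem_Ico] at hq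
    obtain ⟨⟨d, m⟩, j⟩ := q
    dsimp only at hq ⊢
    obtain ⟨⟨he, hn⟩, hj1, hj2⟩ := hq
    show (⟨(d, j + (m - j)), j⟩ : Σ _ : ℕ × ℕ, ℕ) = ⟨(d, m), j⟩
    have h : j + (m - j) = m := by omega
    rw [h]
  · intro p hp
    rw [mem_filter, mem_S] at hp
    obtain ⟨⟨ha, hb, hx, hy, he⟩, hd⟩ := hp
    obtain ⟨a, b, x, y⟩ := p
    simp only at ha hb hx hy he hd
    subst hd
    have h : (x + y) - x = y := by omega
    show f (a, a, x, y) = f (a, a, x, (x + y) - x)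
    rw [h]

lemma diag_xy (n : ℕ) (f : Tup → ℤ) :
    ∑ p ∈ (S n).filter (fun p => p.2.2.1 = p.2.2.2), f p
      = ∑ em ∈ n.divisorsAntidiagonal, ∑ a ∈ Ico 1 em.1, f (a, em.1 - a, em.2, em.2) := by
  rw [Finset.sum_sigma']
  refine Finset.sum_nbij'
    (i := fun p => ⟨(p.1 + p.2.1, p.2.2.1), p.1⟩)
    (j := fun q => (q.2, q.1.1 - q.2, q.1.2, q.1.2)) ?_ ?_ ?_ ?_ ?_
  · intro p hp
    rw [mem_filter, mem_S] at hp
    obtain ⟨⟨ha, hb, hx, hy, he⟩, hd⟩ := hp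
    obtain ⟨a, b, x, y⟩ := p
    simp only at ha hb hx hy he hd
    subst hd
    rw [mem_sigma, Nat.mem_divisorsAntidiagonal]
    dsimp only
    have hax : 0 < a * x := Nat.mul_pos ha hx
    have h : (a + b) * x = n := by rw [Nat.add_mul]; exact he
    exact ⟨⟨h, by omega⟩, by rw [mem_Ico]; omega⟩
  · intro q hq
    rw [mem_sigma, Nat.mem_divisorsAntidiagonal, mem_Ico] at hq
    obtain ⟨⟨e, m⟩, a⟩ := q
    dsimp only at hq ⊢
    obtain ⟨⟨he, hn⟩, ha1, ha2⟩ := hq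
    rw [mem_filter, mem_S]
    dsimp only
    have hm : 0 < m := by
      rcases Nat.eq_zero_or_pos m with h | h
      · exfalso; apply hn; rw [← he, h]; ring
      · exact h
    refine ⟨⟨by omega, by omega, hm, hm, ?_⟩, rfl⟩
    rw [← Nat.add_mul, Nat.add_sub_cancel' ha2.le]
    exact he
  · intro p hp
    rw [mem_filter, mem_S] at hp
    obtain ⟨⟨ha, hb, hx, hy, he⟩, hd⟩ := hp
    obtain ⟨a, b, x, y⟩ := p
    simp only at ha hb hx hy he hd
    subst hd
    have h : (a + b) - a = b := by omega
    show (a, (a + b) - a, x, x) = (a, b, x, x)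
    rw [h]
  · intro q hq
    rw [mem_sigma, Nat.mem_divisorsAntidiagonal, mem_Ico] at hq
    obtain ⟨⟨e, m⟩, a⟩ := q
    dsimp only at hq ⊢
    obtain ⟨⟨he, hn⟩, ha1, ha2⟩ := hq
    show (⟨(a + (e - a), m), a⟩ : Σ _ : ℕ × ℕ, ℕ) = ⟨(e, m), a⟩
    have h : a + (e - a) = e := by omega
    rw [h]
  · intro p hp
    rw [mem_filter, mem_S] at hp
    obtain ⟨⟨ha, hb, hx, hy, he⟩, hd⟩ := hp
    obtain ⟨a, b, x, y⟩ := p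
    simp only at ha hb hx hy he hd
    subst hd
    have h : (a + b) - a = b := by omega
    show f (a, b, x, x) = f (a, (a + b) - a, x, x)
    rw [h]

/-! ### Conversion to convolutions of divisor sums -/

lemma conv (n : ℕ) (f g : ℕ → ℤ) :
    ∑ p ∈ S n, f p.1 * g p.2.1
      = ∑ i ∈ Ico 1 n, (∑ a ∈ i.divisors, f a) * (∑ b ∈ (n - i).divisors, g b) := by
  have step1 : ∀ i : ℕ, (∑ a ∈ i.divisors, f a) * (∑ b ∈ (n - i).divisors, g b)
      = ∑ q ∈ i.divisorsAntidiagonal ×ˢ (n - i).divisorsAntidiagonal, f q.1.1 * g q.2.1 := by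
    intro i
    rw [Finset.sum_product]
    rw [← Nat.sum_divisorsAntidiagonal (fun d _ => f d),
        ← Nat.sum_divisorsAntidiagonal (fun d _ => g d)]
    rw [Finset.sum_mul_sum]
  simp only [step1]
  rw [Finset.sum_sigma']
  refine Finset.sum_nbij'
    (i := fun p => (⟨p.1 * p.2.2.1, ((p.1, p.2.2.1), (p.2.1, p.2.2.2))⟩ :
        Σ _ : ℕ, (ℕ × ℕ) × ℕ × ℕ))
    (j := fun q => (q.2.1.1, q.2.2.1, q.2.1.2, q.2.2.2)) ?_ ?_ ?_ ?_ ?_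
  · intro p hp
    rw [mem_S] at hp
    obtain ⟨a, b, x, y⟩ := p
    obtain ⟨ha, hb, hx, hy, he⟩ := hp
    simp only at ha hb hx hy he
    rw [mem_sigma, mem_product, Nat.mem_divisorsAntidiagonal, Nat.mem_divisorsAntidiagonal,
      mem_Ico]
    dsimp only
    have hby : 0 < b * y := Nat.mul_pos hb hy
    have hax : 0 < a * x := Nat.mul_pos ha hx
    exact ⟨⟨by omega, by omega⟩, ⟨rfl, by omega⟩, ⟨by omega, by omega⟩⟩
  · intro q hq
    rw [mem_sigma, mem_product, Nat.mem_divisorsAntidiagonal, Nat.mem_divisorsAntidiagonal,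
      mem_Ico] at hq
    obtain ⟨i, ⟨a, x⟩, b, y⟩ := q
    dsimp only at hq ⊢
    obtain ⟨⟨hi1, hi2⟩, ⟨hax, hax0⟩, hby, hby0⟩ := hq
    rw [mem_S]
    dsimp only
    have ha : 0 < a := by
      rcases Nat.eq_zero_or_pos a with h | h
      · exfalso; apply hax0; rw [← hax, h]; ring
      · exact h
    have hx : 0 < x := by
      rcases Nat.eq_zero_or_pos x with h | h
      · exfalso; apply hax0; rw [← hax, h]; ring
      · exact h
    have hb : 0 < b := by
      rcases Nat.eq_zero_or_pos b with h | h
      · exfalso; apply hby0; rw [← hby, h]; ring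
      · exact h
    have hy : 0 < y := by
      rcases Nat.eq_zero_or_pos y with h | h
      · exfalso; apply hby0; rw [← hby, h]; ring
      · exact h
    exact ⟨ha, hb, hx, hy, by omega⟩
  · intro p _
    rfl
  · intro q hq
    rw [mem_sigma, mem_product, Nat.mem_divisorsAntidiagonal, Nat.mem_divisorsAntidiagonal,
      mem_Ico] at hq
    obtain ⟨i, ⟨a, x⟩, b, y⟩ := q
    dsimp only at hq ⊢
    obtain ⟨⟨hi1, hi2⟩, ⟨hax, hax0⟩, hby, hby0⟩ := hq
    show (⟨a * x, ((a, x), (b, y))⟩ : Σ _ : ℕ, (ℕ × ℕ) × ℕ × ℕ) = ⟨i, ((a, x), (b, y))⟩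
    rw [hax]
  · intro p _
    rfl

/-! ### Elementary summation facts -/

lemma F6 (m : ℕ) : 42 * ∑ j ∈ Ico 1 m, (j : ℤ)^6
    = 6*(m:ℤ)^7 - 21*(m:ℤ)^6 + 21*(m:ℤ)^5 - 7*(m:ℤ)^3 + (m:ℤ) := by
  induction m with
  | zero => simp
  | succ m ih =>
    rcases Nat.eq_zero_or_pos m with h | h
    · subst h; simp
    · rw [Finset.sum_Ico_succ_top (by omega : 1 ≤ m)]
      push_cast
      push_cast at ih
      linear_combination ih

lemma sum_const_Ico (m : ℕ) (c : ℤ) (hm : 1 ≤ m) :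
    ∑ _j ∈ Ico 1 m, c = ((m : ℤ) - 1) * c := by
  rw [Finset.sum_const, Nat.card_Ico]
  have hc : ((m - 1 : ℕ) : ℤ) = (m : ℤ) - 1 := by
    have := Nat.cast_sub (R := ℤ) hm; simpa using this
  rw [nsmul_eq_mul, hc]

lemma split_xy (n : ℕ) (f : Tup → ℤ) :
    ∑ p ∈ S n, f p
      = ∑ p ∈ (S n).filter (fun p => p.2.2.1 < p.2.2.2), f p
        + ∑ p ∈ (S n).filter (fun p => p.2.2.2 < p.2.2.1), f p
        + ∑ p ∈ (S n).filter (fun p => p.2.2.1 = p.2.2.2), f p := by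
  rw [← Finset.sum_filter_add_sum_filter_not (S n) (fun p => p.2.2.1 < p.2.2.2) f]
  have h2 : (S n).filter (fun p => ¬ p.2.2.1 < p.2.2.2)
      = ((S n).filter (fun p => p.2.2.2 < p.2.2.1))
          ∪ ((S n).filter (fun p => p.2.2.1 = p.2.2.2)) := by
    rw [← Finset.filter_or]
    apply Finset.filter_congr
    intro p _
    constructor
    · intro h; omega
    · intro h; omega
  rw [h2, Finset.sum_union]
  · ring
  · rw [Finset.disjoint_filter]
    intro p _ h1 h2
    omega

lemma split_ab (n : ℕ) (f : Tup → ℤ) :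
    ∑ p ∈ S n, f p
      = ∑ p ∈ (S n).filter (fun p => p.1 < p.2.1), f p
        + ∑ p ∈ (S n).filter (fun p => p.2.1 < p.1), f p
        + ∑ p ∈ (S n).filter (fun p => p.1 = p.2.1), f p := by
  rw [← Finset.sum_filter_add_sum_filter_not (S n) (fun p => p.1 < p.2.1) f]
  have h2 : (S n).filter (fun p => ¬ p.1 < p.2.1)
      = ((S n).filter (fun p => p.2.1 < p.1))
          ∪ ((S n).filter (fun p => p.1 = p.2.1)) := by
    rw [← Finset.filter_or]
    apply Finset.filter_congr
    intro p _
    constructor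
    · intro h; omega
    · intro h; omega
  rw [h2, Finset.sum_union]
  · ring
  · rw [Finset.disjoint_filter]
    intro p _ h1 h2
    omega

lemma sum_DA_fst (n : ℕ) (g : ℕ → ℤ) :
    ∑ q ∈ n.divisorsAntidiagonal, g q.1 = ∑ d ∈ n.divisors, g d :=
  Nat.sum_divisorsAntidiagonal (fun d _ => g d)

end SigmaSevenAux
namespace SigmaSevenAux
open Finset

lemma ev_diag_ab (n : ℕ) :
    ∑ dm ∈ n.divisorsAntidiagonal, ∑ j ∈ Ico 1 dm.2, ((dm.1 : ℤ))^6
      = (n : ℤ) * (∑ d ∈ n.divisors, (d:ℤ)^5) - ∑ d ∈ n.divisors, (d:ℤ)^6 := by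
  have h1 : ∀ q ∈ n.divisorsAntidiagonal,
      ∑ _j ∈ Ico 1 q.2, ((q.1:ℤ))^6 = (n:ℤ) * (q.1:ℤ)^5 - (q.1:ℤ)^6 := by
    intro q hq
    have hm := Nat.mem_divisorsAntidiagonal.mp hq
    have h2 : 0 < q.2 :=
      Nat.pos_of_ne_zero (Nat.right_ne_zero_of_mem_divisorsAntidiagonal hq)
    rw [sum_const_Ico _ _ h2]
    have hc : (q.1:ℤ) * (q.2:ℤ) = (n:ℤ) := by exact_mod_cast hm.1
    linear_combination ((q.1:ℤ)^5) * hc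
  rw [Finset.sum_congr rfl h1, Finset.sum_sub_distrib, ← Finset.mul_sum,
    sum_DA_fst n (fun d => (d:ℤ)^5), sum_DA_fst n (fun d => (d:ℤ)^6)]

lemma ev_diag_xy_ab6 (n : ℕ) :
    ∑ em ∈ n.divisorsAntidiagonal, ∑ a ∈ Ico 1 em.1, ((a:ℤ) + ((em.1 - a : ℕ):ℤ))^6
      = ∑ d ∈ n.divisors, (d:ℤ)^7 - ∑ d ∈ n.divisors, (d:ℤ)^6 := by
  have h1 : ∀ q ∈ n.divisorsAntidiagonal,
      ∑ a ∈ Ico 1 q.1, ((a:ℤ) + ((q.1 - a : ℕ):ℤ))^6 = (q.1:ℤ)^7 - (q.1:ℤ)^6 := by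
    intro q hq
    have h2 : 0 < q.1 :=
      Nat.pos_of_ne_zero (Nat.left_ne_zero_of_mem_divisorsAntidiagonal hq)
    have h3 : ∀ a ∈ Ico 1 q.1, ((a:ℤ) + ((q.1 - a : ℕ):ℤ))^6 = (q.1:ℤ)^6 := by
      intro a ha
      rw [mem_Ico] at ha
      have hc : ((q.1 - a : ℕ):ℤ) = (q.1:ℤ) - (a:ℤ) := by
        have := Nat.cast_sub (R := ℤ) ha.2.le; simpa using this
      rw [hc]
      ring
    rw [Finset.sum_congr rfl h3, sum_const_Ico _ _ h2]
    ring
  rw [Finset.sum_congr rfl h1, Finset.sum_sub_distrib,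
    sum_DA_fst n (fun d => (d:ℤ)^7), sum_DA_fst n (fun d => (d:ℤ)^6)]

lemma ev_diag_xy_a6 (n : ℕ) :
    42 * ∑ em ∈ n.divisorsAntidiagonal, ∑ a ∈ Ico 1 em.1, ((a:ℤ))^6
      = 6 * (∑ d ∈ n.divisors, (d:ℤ)^7) - 21 * (∑ d ∈ n.divisors, (d:ℤ)^6)
        + 21 * (∑ d ∈ n.divisors, (d:ℤ)^5) - 7 * (∑ d ∈ n.divisors, (d:ℤ)^3)
        + ∑ d ∈ n.divisors, (d:ℤ)^1 := by
  rw [Finset.mul_sum]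
  rw [Finset.sum_congr rfl (fun q _ => F6 q.1)]
  rw [sum_DA_fst n
    (fun d => 6*(d:ℤ)^7 - 21*(d:ℤ)^6 + 21*(d:ℤ)^5 - 7*(d:ℤ)^3 + (d:ℤ))]
  have expand : ∀ s : Finset ℕ,
      ∑ d ∈ s, (6*(d:ℤ)^7 - 21*(d:ℤ)^6 + 21*(d:ℤ)^5 - 7*(d:ℤ)^3 + (d:ℤ))
        = 6 * (∑ d ∈ s, (d:ℤ)^7) - 21 * (∑ d ∈ s, (d:ℤ)^6)
          + 21 * (∑ d ∈ s, (d:ℤ)^5) - 7 * (∑ d ∈ s, (d:ℤ)^3) + ∑ d ∈ s, (d:ℤ)^1 := by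
    intro s
    induction s using Finset.induction_on with
    | empty => simp
    | @insert _ _ hnotmem ih =>
      rw [Finset.sum_insert hnotmem, Finset.sum_insert hnotmem, Finset.sum_insert hnotmem,
        Finset.sum_insert hnotmem, Finset.sum_insert hnotmem, Finset.sum_insert hnotmem]
      linear_combination ih
  exact expand _

end SigmaSevenAux

open SigmaSevenAux in
/-- For every `n ≥ 1`, `27·σ₇(n) = 21(2n−1)·σ₅(n) + 7·σ₃(n) − σ₁(n)
+ 168·Σ_{i+j=n, i,j≥1} (3·σ₁(i)·σ₅(j) + 5·σ₃(i)·σ₃(j))`. -/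
theorem sigma_seven_identity (n : ℕ) (hn : 1 ≤ n) :
    27 * (sigmaNat 7 n : ℤ) =
      21 * (2 * (n : ℤ) - 1) * sigmaNat 5 n + 7 * sigmaNat 3 n - sigmaNat 1 n +
        168 * ∑ i ∈ Finset.Ico 1 n,
          (3 * (sigmaNat 1 i : ℤ) * sigmaNat 5 (n - i) +
            5 * (sigmaNat 3 i : ℤ) * sigmaNat 3 (n - i)) := by
  classical
  have hcast : ∀ (k m : ℕ), ((sigmaNat k m : ℕ) : ℤ) = ∑ d ∈ m.divisors, (d:ℤ)^k := by
    intro k m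
    simp only [sigmaNat, Nat.cast_sum, Nat.cast_pow]
  -- convolution sums
  have hU15 : ∑ p ∈ S n, ((p.1:ℤ))^1 * ((p.2.1:ℤ))^5
      = ∑ i ∈ Finset.Ico 1 n,
          (∑ a ∈ i.divisors, (a:ℤ)^1) * (∑ b ∈ (n - i).divisors, (b:ℤ)^5) :=
    conv n (fun a => (a:ℤ)^1) (fun b => (b:ℤ)^5)
  have hU33 : ∑ p ∈ S n, ((p.1:ℤ))^3 * ((p.2.1:ℤ))^3
      = ∑ i ∈ Finset.Ico 1 n,
          (∑ a ∈ i.divisors, (a:ℤ)^3) * (∑ b ∈ (n - i).divisors, (b:ℤ)^3) :=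
    conv n (fun a => (a:ℤ)^3) (fun b => (b:ℤ)^3)
  have e7 : ∑ i ∈ Finset.Ico 1 n,
        (3 * (sigmaNat 1 i : ℤ) * sigmaNat 5 (n - i) +
          5 * (sigmaNat 3 i : ℤ) * sigmaNat 3 (n - i))
      = 3 * (∑ p ∈ S n, ((p.1:ℤ))^1 * ((p.2.1:ℤ))^5)
        + 5 * (∑ p ∈ S n, ((p.1:ℤ))^3 * ((p.2.1:ℤ))^3) := by
    rw [hU15, hU33, Finset.mul_sum, Finset.mul_sum, ← Finset.sum_add_distrib]
    apply Finset.sum_congr rfl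
    intro i _
    rw [hcast 1 i, hcast 5 (n - i), hcast 3 i, hcast 3 (n - i)]
    ring
  -- the sum of (a+b)^6
  have hG : ∑ p ∈ S n, ((p.1:ℤ) + (p.2.1:ℤ))^6
      = 2 * (∑ p ∈ (S n).filter (fun p => p.1 < p.2.1), ((p.2.1:ℤ))^6)
        + ((∑ d ∈ n.divisors, (d:ℤ)^7) - ∑ d ∈ n.divisors, (d:ℤ)^6) := by
    rw [split_xy n (fun p => ((p.1:ℤ) + (p.2.1:ℤ))^6)]
    have t1 : ∑ p ∈ (S n).filter (fun p => p.2.2.1 < p.2.2.2), ((p.1:ℤ) + (p.2.1:ℤ))^6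
        = ∑ p ∈ (S n).filter (fun p => p.1 < p.2.1), ((p.2.1:ℤ))^6 := by
      rw [sum_swap_xy n (fun p => ((p.1:ℤ) + (p.2.1:ℤ))^6)]
      rw [← sum_phi n (fun p => ((p.2.1:ℤ))^6)]
      apply Finset.sum_congr rfl
      intro p _
      dsimp [sw, phi]
      push_cast
      ring
    have t2 : ∑ p ∈ (S n).filter (fun p => p.2.2.2 < p.2.2.1), ((p.1:ℤ) + (p.2.1:ℤ))^6
        = ∑ p ∈ (S n).filter (fun p => p.1 < p.2.1), ((p.2.1:ℤ))^6 := by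
      rw [← sum_phi n (fun p => ((p.2.1:ℤ))^6)]
      apply Finset.sum_congr rfl
      intro p _
      dsimp [phi]
    have t3 : ∑ p ∈ (S n).filter (fun p => p.2.2.1 = p.2.2.2), ((p.1:ℤ) + (p.2.1:ℤ))^6
        = (∑ d ∈ n.divisors, (d:ℤ)^7) - ∑ d ∈ n.divisors, (d:ℤ)^6 := by
      rw [diag_xy n (fun p => ((p.1:ℤ) + (p.2.1:ℤ))^6)]
      exact ev_diag_xy_ab6 n
    rw [t1, t2, t3]
    ring
  -- the sum of (a-b)^6
  have hH : ∑ p ∈ S n, ((p.1:ℤ) - (p.2.1:ℤ))^6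
      = 2 * ∑ p ∈ (S n).filter (fun p => p.2.2.1 < p.2.2.2), ((p.1:ℤ))^6 := by
    rw [split_ab n (fun p => ((p.1:ℤ) - (p.2.1:ℤ))^6)]
    have t2 : ∑ p ∈ (S n).filter (fun p => p.2.1 < p.1), ((p.1:ℤ) - (p.2.1:ℤ))^6
        = ∑ p ∈ (S n).filter (fun p => p.2.2.1 < p.2.2.2), ((p.1:ℤ))^6 := by
      rw [← sum_psi n (fun p => ((p.1:ℤ) - (p.2.1:ℤ))^6)]
      apply Finset.sum_congr rfl
      intro p _
      dsimp [psi]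
      push_cast
      ring
    have t1 : ∑ p ∈ (S n).filter (fun p => p.1 < p.2.1), ((p.1:ℤ) - (p.2.1:ℤ))^6
        = ∑ p ∈ (S n).filter (fun p => p.2.2.1 < p.2.2.2), ((p.1:ℤ))^6 := by
      rw [sum_swap_ab n (fun p => ((p.1:ℤ) - (p.2.1:ℤ))^6)]
      rw [← t2]
      apply Finset.sum_congr rfl
      intro p _
      dsimp [sw]
      ring
    have t3 : ∑ p ∈ (S n).filter (fun p => p.1 = p.2.1), ((p.1:ℤ) - (p.2.1:ℤ))^6 = 0 := by
      apply Finset.sum_eq_zero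
      intro p hp
      have h := (Finset.mem_filter.mp hp).2
      rw [h]
      simp
    rw [t1, t2, t3]
    ring
  -- splitting the sum of a^6 in two ways
  have hsplit1 := split_xy n (fun p => ((p.1:ℤ))^6)
  have hsplit2 := split_ab n (fun p => ((p.1:ℤ))^6)
  have hC1 : ∑ p ∈ (S n).filter (fun p => p.2.2.2 < p.2.2.1), ((p.1:ℤ))^6
      = ∑ p ∈ (S n).filter (fun p => p.1 < p.2.1), ((p.1:ℤ))^6 :=
    sum_phi n (fun p => ((p.1:ℤ))^6)
  have hC2 : ∑ p ∈ (S n).filter (fun p => p.1 < p.2.1), ((p.2.1:ℤ))^6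
      = ∑ p ∈ (S n).filter (fun p => p.2.1 < p.1), ((p.1:ℤ))^6 :=
    sum_swap_ab n (fun p => ((p.2.1:ℤ))^6)
  -- diagonal evaluations
  have hDab : ∑ p ∈ (S n).filter (fun p => p.1 = p.2.1), ((p.1:ℤ))^6
      = (n : ℤ) * (∑ d ∈ n.divisors, (d:ℤ)^5) - ∑ d ∈ n.divisors, (d:ℤ)^6 := by
    rw [diag_ab n (fun p => ((p.1:ℤ))^6)]
    exact ev_diag_ab n
  have hDxy : 42 * ∑ p ∈ (S n).filter (fun p => p.2.2.1 = p.2.2.2), ((p.1:ℤ))^6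
      = 6 * (∑ d ∈ n.divisors, (d:ℤ)^7) - 21 * (∑ d ∈ n.divisors, (d:ℤ)^6)
        + 21 * (∑ d ∈ n.divisors, (d:ℤ)^5) - 7 * (∑ d ∈ n.divisors, (d:ℤ)^3)
        + ∑ d ∈ n.divisors, (d:ℤ)^1 := by
    rw [diag_xy n (fun p => ((p.1:ℤ))^6)]
    exact ev_diag_xy_a6 n
  -- binomial expansion with swap symmetry
  have hswap15 : ∑ p ∈ S n, ((p.1:ℤ))^5 * ((p.2.1:ℤ))
      = ∑ p ∈ S n, ((p.1:ℤ))^1 * ((p.2.1:ℤ))^5 := by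
    rw [sum_swap_all n (fun p => ((p.1:ℤ))^5 * ((p.2.1:ℤ)))]
    apply Finset.sum_congr rfl
    intro p _
    dsimp [sw]
    ring
  have hE4 : (∑ p ∈ S n, ((p.1:ℤ) + (p.2.1:ℤ))^6) - ∑ p ∈ S n, ((p.1:ℤ) - (p.2.1:ℤ))^6
      = 24 * (∑ p ∈ S n, ((p.1:ℤ))^1 * ((p.2.1:ℤ))^5)
        + 40 * (∑ p ∈ S n, ((p.1:ℤ))^3 * ((p.2.1:ℤ))^3) := by
    have hpt : ∑ p ∈ S n, (((p.1:ℤ) + (p.2.1:ℤ))^6 - ((p.1:ℤ) - (p.2.1:ℤ))^6)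
        = ∑ p ∈ S n, (12 * (((p.1:ℤ))^5 * ((p.2.1:ℤ)))
            + (40 * (((p.1:ℤ))^3 * ((p.2.1:ℤ))^3) + 12 * (((p.1:ℤ))^1 * ((p.2.1:ℤ))^5))) :=
      Finset.sum_congr rfl (fun p _ => by ring)
    rw [Finset.sum_sub_distrib, Finset.sum_add_distrib, Finset.sum_add_distrib,
      ← Finset.mul_sum, ← Finset.mul_sum, ← Finset.mul_sum] at hpt
    linear_combination hpt + 12 * hswap15
  -- final assembly
  rw [hcast 7 n, hcast 5 n, hcast 3 n, hcast 1 n]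
  linear_combination 21 * hE4 - 168 * e7 - 21 * hG + 21 * hH - 42 * hsplit1
    + 42 * hsplit2 - 42 * hC1 - 42 * hC2 + 42 * hDab - hDxy
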